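/- Let p be an odd prime and let P_p be the ((p-1)/2)-square matrix with (α,i) entry P(⟨αi/p⟩), where P(x)=x(1-x). Then the constant vector with all entries equal to 2p/(p²-1) is a solution of the linear system P_p · X = (1/6)·𝟏, where 𝟏 is the all-ones vector. -/

import Mathlib

/-- `P x = x(1-x)` -/
noncomputable def Ptor (x : ℝ) : ℝ := x * (1 - x)

/-- The matrix `P_p` with `(α,i)` entry `P(⟨αi/p⟩)`, `α,i ∈ {1,…,(p-1)/2}`. -/
noncomputable def Pmatrix (p : ℕ) : Matrix (Fin ((p - 1) / 2)) (Fin ((p - 1) / 2)) ℝ :=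
  fun α i => Ptor (Int.fract ((((α : ℕ) + 1) * ((i : ℕ) + 1) : ℝ) / p))

lemma sum_aux (x : ℝ) (m : ℕ) :
    ∑ j ∈ Finset.range m, (((j : ℝ) + 1) * (x - ((j : ℝ) + 1)))
      = x * m * (m + 1) / 2 - m * (m + 1) * (2 * m + 1) / 6 := by
  induction m with
  | zero => simp
  | succ n ih => rw [Finset.sum_range_succ, ih]; push_cast; ring

theorem const_vector_solves (p : ℕ) (hp : p.Prime) (hodd : Odd p) :
    (Pmatrix p).mulVec (fun _ => 2 * (p : ℝ) / ((p : ℝ) ^ 2 - 1))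
      = fun _ => 1 / 6 := by
  have hp2 := hp.two_le
  have hpm : p % 2 = 1 := Nat.odd_iff.mp hodd
  have hp3 : 3 ≤ p := by omega
  set m := (p - 1) / 2 with hm
  have hmp : p = 2 * m + 1 := by omega
  have hm1 : 1 ≤ m := by omega
  have hp0R : (0 : ℝ) < p := by exact_mod_cast (by omega : 0 < p)
  have hpRne : (p : ℝ) ≠ 0 := ne_of_gt hp0R
  haveI : Fact p.Prime := ⟨hp⟩
  funext α
  simp only [Matrix.mulVec, dotProduct, Pmatrix]
  set a : ℕ := (α : ℕ) + 1 with ha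
  have haltp : a < p := by have := α.isLt; omega
  have hane : ¬ p ∣ a := fun h => by have := Nat.le_of_dvd (by omega) h; omega
  set r : Fin m → ℕ := fun i => (a * ((i : ℕ) + 1)) % p with hrdef
  have hrlt : ∀ i, r i < p := fun i => Nat.mod_lt _ (by omega)
  have hndvd : ∀ i : Fin m, ¬ p ∣ a * ((i : ℕ) + 1) := by
    intro i h
    rcases (Nat.Prime.dvd_mul hp).mp h with h | h
    · exact hane h
    · have := Nat.le_of_dvd (by omega) h; have := i.isLt; omega
  have hrpos : ∀ i, 0 < r i := by
    intro i
    rcases Nat.eq_zero_or_pos (r i) with h | h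
    · exact absurd (Nat.dvd_of_mod_eq_zero h) (hndvd i)
    · exact h
  have hminlt : ∀ i : Fin m, min (r i) (p - r i) - 1 < m := by
    intro i; have := hrlt i; have := hrpos i; omega
  set σ : Fin m → Fin m := fun i => ⟨min (r i) (p - r i) - 1, hminlt i⟩ with hσ
  have haZ : (a : ZMod p) ≠ 0 := by
    rw [Ne, ZMod.natCast_eq_zero_iff]; exact hane
  have hcast : ∀ i : Fin m, ((r i : ℕ) : ZMod p)
      = (a : ZMod p) * ((((i : ℕ) + 1 : ℕ)) : ZMod p) := by
    intro i
    show (((a * ((i : ℕ) + 1)) % p : ℕ) : ZMod p) = _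
    rw [ZMod.natCast_mod]; push_cast; ring
  have hinj : Function.Injective σ := by
    intro i j hij
    have hval : min (r i) (p - r i) - 1 = min (r j) (p - r j) - 1 :=
      congrArg Fin.val hij
    have h1i := hrpos i; have h2i := hrlt i
    have h1j := hrpos j; have h2j := hrlt j
    have hcase : r i = r j ∨ r i + r j = p := by omega
    rcases hcase with h | h
    · have h2 : (a : ZMod p) * ((((i : ℕ) + 1 : ℕ)) : ZMod p)
          = (a : ZMod p) * ((((j : ℕ) + 1 : ℕ)) : ZMod p) := by
        rw [← hcast i, ← hcast j, h]
      have h3 := mul_left_cancel₀ haZ h2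
      have h4 := (ZMod.natCast_eq_natCast_iff _ _ _).mp h3
      have h5 : ((i : ℕ) + 1) % p = ((j : ℕ) + 1) % p := h4
      have hi := i.isLt; have hj := j.isLt
      rw [Nat.mod_eq_of_lt (by omega), Nat.mod_eq_of_lt (by omega)] at h5
      exact Fin.ext (by omega)
    · exfalso
      have h2 : ((r i + r j : ℕ) : ZMod p) = 0 := by
        rw [h]; exact ZMod.natCast_self p
      rw [Nat.cast_add, hcast i, hcast j, ← mul_add, ← Nat.cast_add] at h2
      have h3 : (((((i : ℕ) + 1) + ((j : ℕ) + 1) : ℕ)) : ZMod p) = 0 := by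
        rcases mul_eq_zero.mp h2 with h | h
        · exact absurd h haZ
        · exact h
      have h4 := (ZMod.natCast_eq_zero_iff _ _).mp h3
      have h5 := Nat.le_of_dvd (by omega) h4
      have hi := i.isLt; have hj := j.isLt
      omega
  have hbij : Function.Bijective σ := Finite.injective_iff_bijective.mp hinj
  have hfract : ∀ i : Fin m,
      Int.fract (((a * ((i : ℕ) + 1) : ℕ) : ℝ) / p) = (r i : ℝ) / p := by
    intro i
    have hdm := Nat.div_add_mod (a * ((i : ℕ) + 1)) p
    set q := a * ((i : ℕ) + 1) / p with hq
    have heq : ((a * ((i : ℕ) + 1) : ℕ) : ℝ) / p = (q : ℝ) + (r i : ℝ) / p := by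
      rw [show a * ((i : ℕ) + 1) = p * q + r i from hdm.symm]
      push_cast
      field_simp
    rw [heq, Int.fract_natCast_add, Int.fract_eq_self.mpr]
    constructor
    · positivity
    · rw [div_lt_one hp0R]; exact_mod_cast hrlt i
  have hPtor : ∀ i : Fin m,
      Ptor ((r i : ℝ) / p) = Ptor ((((σ i : ℕ) + 1 : ℕ) : ℝ) / p) := by
    intro i
    have hk : ((σ i : ℕ) + 1 : ℕ) = min (r i) (p - r i) := by
      show (min (r i) (p - r i) - 1) + 1 = _
      have := hrpos i; have := hrlt i; omega
    rcases min_choice (r i) (p - r i) with h | h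
    · rw [hk, h]
    · rw [hk, h]
      have hc : ((p - r i : ℕ) : ℝ) = (p : ℝ) - (r i : ℝ) :=
        Nat.cast_sub (le_of_lt (hrlt i))
      rw [hc]
      unfold Ptor
      field_simp
      ring
  have hP2 : ∀ x : ℝ, Ptor (x / p) = x * ((p : ℝ) - x) / (p : ℝ) ^ 2 := by
    intro x
    unfold Ptor
    field_simp
  have hstep : ∀ i : Fin m,
      Ptor (Int.fract (((((α : ℕ) : ℝ)) + 1) * ((((i : ℕ)) : ℝ) + 1) / p)) * (2 * ↑p / ((p:ℝ) ^ 2 - 1))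
      = Ptor (((((σ i : ℕ)) : ℝ) + 1) / p) * (2 * ↑p / ((p:ℝ) ^ 2 - 1)) := by
    intro i
    congr 1
    have h1 : ((((α : ℕ) : ℝ)) + 1) * ((((i : ℕ)) : ℝ) + 1) = ((a * ((i : ℕ) + 1) : ℕ) : ℝ) := by
      rw [ha]; push_cast; ring
    rw [h1, hfract i, hPtor i]
    norm_num
  have hgoal : ∑ i : Fin m,
      Ptor (((((i : ℕ)) : ℝ) + 1) / p) * (2 * ↑p / ((p:ℝ) ^ 2 - 1)) = 1 / 6 := by
    have hpp : ((p : ℝ)) = 2 * (m : ℝ) + 1 := by exact_mod_cast congrArg (Nat.cast (R := ℝ)) hmp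
    have hne2 : ((p : ℝ)) ^ 2 - 1 ≠ 0 := by
      rw [hpp]
      have hmr : (1 : ℝ) ≤ (m : ℝ) := by exact_mod_cast hm1
      nlinarith
    rw [Fin.sum_univ_eq_sum_range
      (fun j => Ptor ((((j : ℕ) : ℝ) + 1) / p) * (2 * ↑p / ((p:ℝ) ^ 2 - 1))) m]
    have hterm : ∀ j ∈ Finset.range m,
        Ptor ((((j : ℕ) : ℝ) + 1) / p) * (2 * ↑p / ((p:ℝ) ^ 2 - 1))
        = (((j : ℝ) + 1) * ((p : ℝ) - ((j : ℝ) + 1))) * (2 * ↑p / ((p:ℝ) ^ 2 - 1) / (p:ℝ)^2) := by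
      intro j _
      rw [hP2]
      ring
    rw [Finset.sum_congr rfl hterm, ← Finset.sum_mul, sum_aux]
    rw [hpp]
    have hmr : (1 : ℝ) ≤ (m : ℝ) := by exact_mod_cast hm1
    rw [hpp] at hne2
    field_simp
    ring
  rw [← hgoal]
  exact Fintype.sum_bijective σ hbij _ _ hstep
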